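/- EM lower-bound inequality: with the notation of finite mixtures, for positive mixture weights λ, λ' and positive component values P, P' at each data point, Σₙ log(Σ_c λ'_c P'_c(xₙ)) - Σₙ log(Σ_c λ_c P_c(xₙ)) ≥ Q(λ', P') - Q(λ, P), where Q(μ, R) = Σₙ Σ_c γ_{nc} log(μ_c R_c(xₙ)) and γ_{nc} = λ_c P_c(xₙ)/Σ_k λ_k P_k(xₙ). -/

import Mathlib

open Real Finset in
/-- EM lower-bound inequality: the improvement in mixture log-likelihood is at least
the improvement in the auxiliary function `Q` computed with old responsibilities. -/
theorem em_lower_bound {X : Type*} {N C : ℕ} (x : Fin N → X)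
    (P P' : Fin C → X → ℝ) (lam lam' : Fin C → ℝ)
    (hlam : ∀ c, 0 < lam c) (hlam' : ∀ c, 0 < lam' c)
    (hlams : ∑ c, lam c = 1) (hlams' : ∑ c, lam' c = 1)
    (hP : ∀ c n, 0 < P c (x n)) (hP' : ∀ c n, 0 < P' c (x n)) :
    let γ : Fin N → Fin C → ℝ := fun n c =>
      lam c * P c (x n) / ∑ k, lam k * P k (x n)
    let Q : (Fin C → ℝ) → (Fin C → X → ℝ) → ℝ := fun μ R =>
      ∑ n, ∑ c, γ n c * Real.log (μ c * R c (x n))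
    (∑ n, Real.log (∑ c, lam' c * P' c (x n))) -
        (∑ n, Real.log (∑ c, lam c * P c (x n))) ≥
      Q lam' P' - Q lam P := by
  intro γ Q
  have hC : (Finset.univ : Finset (Fin C)).Nonempty := by
    rcases (Finset.univ : Finset (Fin C)).eq_empty_or_nonempty with h | h
    · rw [h, Finset.sum_empty] at hlams; norm_num at hlams
    · exact h
  have hS : ∀ n, 0 < ∑ k, lam k * P k (x n) := fun n =>
    Finset.sum_pos (fun k _ => mul_pos (hlam k) (hP k n)) hC
  have hS' : ∀ n, 0 < ∑ k, lam' k * P' k (x n) := fun n =>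
    Finset.sum_pos (fun k _ => mul_pos (hlam' k) (hP' k n)) hC
  have hγpos : ∀ n c, 0 < γ n c := fun n c =>
    div_pos (mul_pos (hlam c) (hP c n)) (hS n)
  have hγsum : ∀ n, ∑ c, γ n c = 1 := fun n => by
    simp only [γ, ← Finset.sum_div]; exact div_self (hS n).ne'
  -- per-n inequality
  have key : ∀ n, ∑ c, γ n c * (Real.log (lam' c * P' c (x n)) - Real.log (lam c * P c (x n)))
      ≤ Real.log (∑ c, lam' c * P' c (x n)) - Real.log (∑ c, lam c * P c (x n)) := by
    intro n
    have jensen := ConcaveOn.le_map_sum (strictConcaveOn_log_Ioi.concaveOn)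
      (t := Finset.univ) (w := γ n)
      (p := fun c => (lam' c * P' c (x n)) / (lam c * P c (x n)))
      (fun c _ => (hγpos n c).le) (hγsum n)
      (fun c _ => Set.mem_Ioi.mpr (div_pos (mul_pos (hlam' c) (hP' c n))
        (mul_pos (hlam c) (hP c n))))
    have hsum : ∑ c, γ n c • ((lam' c * P' c (x n)) / (lam c * P c (x n)))
        = (∑ c, lam' c * P' c (x n)) / (∑ c, lam c * P c (x n)) := by
      rw [Finset.sum_div]
      refine Finset.sum_congr rfl fun c _ => ?_
      have h1 := (mul_pos (hlam c) (hP c n)).ne'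
      have h2 := (hS n).ne'
      simp only [γ, smul_eq_mul]
      rw [div_mul_div_comm, mul_comm (lam c * P c (x n)) (lam' c * P' c (x n)), mul_div_mul_right _ _ h1]
    rw [hsum] at jensen
    calc ∑ c, γ n c * (Real.log (lam' c * P' c (x n)) - Real.log (lam c * P c (x n)))
        = ∑ c, γ n c • Real.log ((lam' c * P' c (x n)) / (lam c * P c (x n))) := by
          refine Finset.sum_congr rfl fun c _ => ?_
          rw [smul_eq_mul, Real.log_div (mul_pos (hlam' c) (hP' c n)).ne'
            (mul_pos (hlam c) (hP c n)).ne']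
      _ ≤ Real.log ((∑ c, lam' c * P' c (x n)) / (∑ c, lam c * P c (x n))) := jensen
      _ = _ := Real.log_div (hS' n).ne' (hS n).ne'
  have := Finset.sum_le_sum (fun n (_ : n ∈ Finset.univ) => key n)
  simp only [Q, mul_sub, Finset.sum_sub_distrib, ge_iff_le] at *
  linarith [this]
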